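/- For every real number t and every α ∈ (1,2], it holds that e^t ≤ t + e^{|t|^α}. -/
import Mathlib

lemma exp_le_quad {x : ℝ} (hx : |x| ≤ 1) : Real.exp x ≤ 1 + x + x ^ 2 := by
  have h := Real.exp_bound hx (n := 2) (by norm_num)
  have hsum : ∑ i ∈ Finset.range 2, x ^ i / i.factorial = 1 + x := by
    simp [Finset.sum_range_succ]
  rw [hsum] at h
  have h2 : Real.exp x - (1 + x) ≤ |x| ^ 2 * ((2 : ℕ).succ / ((2 : ℕ).factorial * 2)) :=
    (abs_le.mp h).2
  norm_num [Nat.factorial] at h2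
  have hsq : |x| ^ 2 = x ^ 2 := sq_abs x
  nlinarith [sq_nonneg x]

theorem stmt0 (t α : ℝ) (h1 : 1 < α) (h2 : α ≤ 2) :
    Real.exp t ≤ t + Real.exp (|t| ^ α) := by
  rcases le_or_gt |t| 1 with ht | ht
  · -- small case
    rcases eq_or_ne t 0 with rfl | ht0
    · simp [Real.rpow_natCast]
      positivity
    · have h0 : (0 : ℝ) < |t| := abs_pos.mpr ht0
      have hle : |t| ^ (2 : ℝ) ≤ |t| ^ α :=
        Real.rpow_le_rpow_of_exponent_ge h0 ht h2
      have h2' : |t| ^ (2 : ℝ) = t ^ 2 := by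
        rw [show (2 : ℝ) = ((2 : ℕ) : ℝ) by norm_num, Real.rpow_natCast, sq_abs]
      have hexp : 1 + |t| ^ α ≤ Real.exp (|t| ^ α) := by
        have := Real.add_one_le_exp (|t| ^ α); linarith
      have := exp_le_quad ht
      linarith [hle, h2' ▸ hle]
  · -- large case
    have h1t : (1 : ℝ) ≤ |t| := ht.le
    have hle : |t| ≤ |t| ^ α := by
      calc |t| = |t| ^ (1 : ℝ) := (Real.rpow_one _).symm
        _ ≤ |t| ^ α := Real.rpow_le_rpow_of_exponent_le h1t h1.le
    rcases le_or_gt 0 t with htpos | htneg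
    · have : Real.exp t ≤ Real.exp (|t| ^ α) :=
        Real.exp_le_exp.mpr (le_trans (le_abs_self t) hle)
      linarith
    · have hexp : 1 + |t| ≤ Real.exp (|t| ^ α) := by
        have h := Real.add_one_le_exp (|t| ^ α); linarith
      have habs : |t| = -t := abs_of_neg htneg
      have : Real.exp t ≤ 1 := Real.exp_le_one_iff.mpr htneg.le
      linarith
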